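/- Fix a real number θ ≠ 0. The Moyal star-product is tracial: for all complex-valued Schwartz functions f₁, f₂ on ℝ^{2d}, ∫_{ℝ^{2d}} (f₁ ⋆ f₂)(z) dz = ∫_{ℝ^{2d}} f₁(z) f₂(z) dz. -/

import Mathlib

open MeasureTheory Complex Filter
open scoped Real ENNReal

noncomputable section

/-- `ℝ^d` as a measure space. -/
abbrev Rd (d : ℕ) := Fin d → ℝ

/-- `ℝ^d × ℝ^d`, the phase space `ℝ^{2d}`. -/
abbrev Phase (d : ℕ) := Rd d × Rd d

/-- Euclidean inner product `⟨x,w⟩` on `ℝ^d`. -/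
def dot {d : ℕ} (x w : Rd d) : ℝ := ∑ i, x i * w i

/-- Directional derivative along the vector `v`. -/
def pderiv1 {E F : Type*} [NormedAddCommGroup E] [NormedSpace ℝ E]
    [NormedAddCommGroup F] [NormedSpace ℝ F] (v : E) (f : E → F) : E → F :=
  fun z => fderiv ℝ f z v

/-- Laplacian in all `2d` variables `(x,w)` on `ℝ^d × ℝ^d`. -/
def laplacian {d : ℕ} {F : Type*} [NormedAddCommGroup F] [NormedSpace ℝ F]
    (f : Phase d → F) : Phase d → F := fun z =>
  (∑ i : Fin d, pderiv1 ((Pi.single i 1 : Rd d), (0 : Rd d))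
      (pderiv1 ((Pi.single i 1 : Rd d), (0 : Rd d)) f) z)
  + ∑ i : Fin d, pderiv1 ((0 : Rd d), (Pi.single i 1 : Rd d))
      (pderiv1 ((0 : Rd d), (Pi.single i 1 : Rd d)) f) z

/-- The operator `O`: `(O·f)(x,w) = (1−Δ)((1+|x|²+|w|²)⁻¹ f(x,w))`. -/
def OpO {d : ℕ} {F : Type*} [NormedAddCommGroup F] [NormedSpace ℝ F]
    (f : Phase d → F) : Phase d → F := fun z =>
  (fun y : Phase d => (1 + dot y.1 y.1 + dot y.2 y.2)⁻¹ • f y) z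
    - laplacian (fun y : Phase d => (1 + dot y.1 y.1 + dot y.2 y.2)⁻¹ • f y) z

/-- The oscillating phase `e^{i⟨x,w⟩}`. -/
def osc {d : ℕ} (z : Phase d) : ℂ := Complex.exp (Complex.I * (dot z.1 z.2 : ℝ))

/-- The Moyal star-product on `ℝ^{2d}`:
`(f⋆g)(x,w) = (πθ)^{-2d} ∫ f(x₁,w₁) g(x₂,w₂)
  exp((2i/θ)(⟨x₂−x,w₁⟩+⟨x−x₁,w₂⟩+⟨x₁−x₂,w⟩)) dx₁dw₁dx₂dw₂`. -/
def moyal {d : ℕ} (θ : ℝ) (f g : Phase d → ℂ) : Phase d → ℂ := fun z =>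
  ((((Real.pi * θ) ^ (2 * d))⁻¹ : ℝ) : ℂ) *
    ∫ p : Phase d × Phase d,
      f p.1 * g p.2 * Complex.exp ((2 * Complex.I / (θ : ℂ)) *
        ((dot (p.2.1 - z.1) p.1.2 + dot (z.1 - p.1.1) p.2.2
            + dot (p.1.1 - p.2.1) z.2 : ℝ) : ℂ))

-- auxiliary development, to be inserted before the theorem
open scoped FourierTransform RealInnerProductSpace

namespace MoyalTrace

variable {d : ℕ}

/-! ### `dot` lemmas -/

lemma dot_comm (a b : Rd d) : dot a b = dot b a :=
  Finset.sum_congr rfl fun i _ => mul_comm _ _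

lemma dot_sub_left (a b c : Rd d) : dot (a - b) c = dot a c - dot b c := by
  simp [dot, sub_mul, Finset.sum_sub_distrib]

lemma dot_sub_right (a b c : Rd d) : dot a (b - c) = dot a b - dot a c := by
  simp [dot, mul_sub, Finset.sum_sub_distrib]

lemma dot_add_left (a b c : Rd d) : dot (a + b) c = dot a c + dot b c := by
  simp [dot, add_mul, Finset.sum_add_distrib]

lemma dot_add_right (a b c : Rd d) : dot a (b + c) = dot a b + dot a c := by
  simp [dot, mul_add, Finset.sum_add_distrib]

lemma dot_smul_left (r : ℝ) (a b : Rd d) : dot (r • a) b = r * dot a b := by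
  simp [dot, Finset.mul_sum, mul_assoc]

lemma dot_smul_right (r : ℝ) (a b : Rd d) : dot a (r • b) = r * dot a b := by
  simp only [dot, Finset.mul_sum, Pi.smul_apply, smul_eq_mul]
  exact Finset.sum_congr rfl fun i _ => by ring

lemma dot_neg_left (a b : Rd d) : dot (-a) b = - dot a b := by
  simp [dot, Finset.sum_neg_distrib]

lemma dot_neg_right (a b : Rd d) : dot a (-b) = - dot a b := by
  simp [dot, Finset.sum_neg_distrib]

lemma continuous_dot₂ : Continuous fun p : Rd d × Rd d => dot p.1 p.2 := by
  unfold dot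
  exact continuous_finset_sum _ fun i _ =>
    ((continuous_apply i).comp continuous_fst).mul ((continuous_apply i).comp continuous_snd)

/-! ### the pairing `qp` -/

def qp (a b : Phase d) : ℝ := dot a.1 b.1 + dot a.2 b.2

lemma continuous_qp₂ : Continuous fun p : Phase d × Phase d => qp p.1 p.2 :=
  (continuous_dot₂.comp ((continuous_fst.fst).prodMk (continuous_snd.fst))).add
    (continuous_dot₂.comp ((continuous_fst.snd).prodMk (continuous_snd.snd)))

lemma continuous_qp_left (η : Phase d) : Continuous fun z : Phase d => qp z η :=
  continuous_qp₂.comp (continuous_id.prodMk continuous_const)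

lemma qp_neg_right (a b : Phase d) : qp a (-b) = - qp a b := by
  simp [qp, dot_neg_right]; ring

lemma qp_smul_right (r : ℝ) (a b : Phase d) : qp a (r • b) = r * qp a b := by
  simp [qp, dot_smul_right]; ring

lemma qp_smul_left (r : ℝ) (a b : Phase d) : qp (r • a) b = r * qp a b := by
  simp [qp, dot_smul_left]; ring

lemma qp_sub_left (a b c : Phase d) : qp (a - b) c = qp a c - qp b c := by
  simp [qp, dot_sub_left]; ring

lemma qp_J (η : Phase d) : qp ((η.2, -η.1) : Phase d) η = 0 := by
  show dot η.2 η.1 + dot (-η.1) η.2 = 0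
  rw [dot_neg_left, dot_comm]; ring

/-! ### Euclidean model -/

abbrev Ed (d : ℕ) := EuclideanSpace ℝ (Fin d ⊕ Fin d)

def sumLE (d : ℕ) : ((Fin d ⊕ Fin d) → ℝ) ≃ₗ[ℝ] Phase d where
  toFun v := (fun i => v (Sum.inl i), fun i => v (Sum.inr i))
  invFun p := Sum.elim p.1 p.2
  map_add' _ _ := rfl
  map_smul' _ _ := rfl
  left_inv v := funext fun i => by cases i <;> rfl
  right_inv p := rfl

def eLE (d : ℕ) : Ed d ≃ₗ[ℝ] Phase d := (WithLp.linearEquiv 2 ℝ _).trans (sumLE d)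

def eCLE (d : ℕ) : Ed d ≃L[ℝ] Phase d := (eLE d).toContinuousLinearEquiv

def eME (d : ℕ) : Ed d ≃ᵐ Phase d :=
  (MeasurableEquiv.toLp 2 _).symm.trans (MeasurableEquiv.sumPiEquivProdPi fun _ => ℝ)

lemma eME_apply (a : Ed d) : eME d a = eCLE d a := rfl

lemma eME_mp : MeasurePreserving (eME d) volume volume :=
  (volume_measurePreserving_sumPiEquivProdPi (fun _ : Fin d ⊕ Fin d => ℝ)).comp
    (EuclideanSpace.volume_preserving_symm_measurableEquiv_toLp (Fin d ⊕ Fin d))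

lemma eME_def (a : Ed d) :
    eME d a = (fun i => a (Sum.inl i), fun i => a (Sum.inr i)) := rfl

lemma qp_eME (a b : Ed d) : qp (eME d a) (eME d b) = ⟪a, b⟫ := by
  rw [eME_def, eME_def]
  simp only [qp, dot]
  rw [PiLp.inner_apply]
  simp only [RCLike.inner_apply, conj_trivial]
  rw [Fintype.sum_sum_type]
  congr 1 <;> exact Finset.sum_congr rfl fun _ _ => mul_comm _ _

lemma eME_symm_apply (u : Phase d) : (eME d).symm u = (eCLE d).symm u := by
  have h : eCLE d ((eME d).symm u) = u := by
    rw [← eME_apply]; exact (eME d).apply_symm_apply u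
  calc (eME d).symm u = (eCLE d).symm (eCLE d ((eME d).symm u)) :=
        ((eCLE d).symm_apply_apply _).symm
    _ = (eCLE d).symm u := by rw [h]

lemma eME_symm_coe : ⇑(eME d).symm = ⇑(eCLE d).symm := funext eME_symm_apply

/-! ### Schwartz transport and the pairing Fourier transform -/

def toE (f : SchwartzMap (Phase d) ℂ) : SchwartzMap (Ed d) ℂ :=
  SchwartzMap.compCLMOfContinuousLinearEquiv ℝ (eCLE d) f

lemma toE_apply (f : SchwartzMap (Phase d) ℂ) (a : Ed d) : toE f a = f (eCLE d a) := rfl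

def QF (h : Phase d → ℂ) (ξ : Phase d) : ℂ :=
  ∫ v : Phase d, Complex.exp (((-2 * Real.pi * qp v ξ : ℝ) : ℂ) * Complex.I) * h v

lemma QF_eq (g : SchwartzMap (Phase d) ℂ) (ξ : Phase d) :
    QF (⇑g) ξ = 𝓕 (⇑(toE g)) ((eME d).symm ξ) := by
  rw [Real.fourier_eq']
  rw [← MeasurePreserving.integral_comp' (eME_mp.symm (eME d))]
  refine (integral_congr_ae (Eventually.of_forall fun u => ?_))
  have h1 : ⟪(eME d).symm u, (eME d).symm ξ⟫ = qp u ξ := by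
    rw [← qp_eME]; simp
  have h2 : (toE g) ((eME d).symm u) = g u := by
    rw [toE_apply, ← eME_apply, MeasurableEquiv.apply_symm_apply]
  simp only [smul_eq_mul, h1, h2]

lemma QF_eq' (g : SchwartzMap (Phase d) ℂ) :
    QF (⇑g) = fun ξ => 𝓕 (⇑(toE g)) ((eME d).symm ξ) := funext (QF_eq g)

lemma fourier_toE_int (g : SchwartzMap (Phase d) ℂ) :
    MeasureTheory.Integrable (𝓕 (⇑(toE g))) volume := by
  rw [← SchwartzMap.fourier_coe]
  exact SchwartzMap.integrable _

lemma fourier_toE_cont (g : SchwartzMap (Phase d) ℂ) :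
    Continuous (𝓕 (⇑(toE g))) := by
  rw [← SchwartzMap.fourier_coe]
  exact SchwartzMap.continuous _

lemma QF_continuous (g : SchwartzMap (Phase d) ℂ) : Continuous (QF (⇑g)) := by
  rw [QF_eq' g]
  exact (fourier_toE_cont g).comp (eME_symm_coe ▸ (eCLE d).symm.continuous)

lemma QF_integrable (g : SchwartzMap (Phase d) ℂ) :
    MeasureTheory.Integrable (QF (⇑g)) volume := by
  rw [QF_eq' g]
  exact ((eME_mp.symm (eME d)).integrable_comp_emb
    (eME d).symm.measurableEmbedding).2 (fourier_toE_int g)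

/-! ### small complex lemmas -/

lemma norm_exp_real_mul_I (r : ℝ) : ‖Complex.exp ((r : ℂ) * Complex.I)‖ = 1 := by
  rw [Complex.norm_exp_ofReal_mul_I]

lemma phase_norm (θ r : ℝ) : ‖Complex.exp ((2 * Complex.I / (θ : ℂ)) * (r : ℂ))‖ = 1 := by
  have h : (2 * Complex.I / (θ : ℂ)) * (r : ℂ) = ((2 * r / θ : ℝ) : ℂ) * Complex.I := by
    push_cast; ring
  rw [h, norm_exp_real_mul_I]

/-! ### main computation -/

instance : Measure.IsAddHaarMeasure (volume : Measure (Phase d)) :=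
  (Measure.prod.instIsAddHaarMeasure _ _ : Measure.IsAddHaarMeasure ((volume : Measure (Rd d)).prod volume))

lemma finrank_phase : Module.finrank ℝ (Phase d) = 2 * d := by
  simp [Module.finrank_prod, Module.finrank_pi]
  ring

def Hfun (θ : ℝ) (f g : SchwartzMap (Phase d) ℂ) (z η : Phase d) : ℂ :=
  Complex.exp (((2 * Real.pi * qp z η : ℝ) : ℂ) * Complex.I) *
    (f (z + (Real.pi * θ) • ((η.2, -η.1) : Phase d)) * QF (⇑g) η)

def Phi (θ : ℝ) (f g : SchwartzMap (Phase d) ℂ) (z : Phase d) (p₁ : Phase d) : ℂ :=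
  f p₁ * Complex.exp ((2 * Complex.I / (θ : ℂ)) * ((dot p₁.1 z.2 - dot z.1 p₁.2 : ℝ) : ℂ))
    * QF (⇑g) ((Real.pi * θ)⁻¹ • ((z.2 - p₁.2, p₁.1 - z.1) : Phase d))

lemma moyal_integrand_int (θ : ℝ) (f g : SchwartzMap (Phase d) ℂ) (z : Phase d) :
    MeasureTheory.Integrable (fun p : Phase d × Phase d =>
      f p.1 * g p.2 * Complex.exp ((2 * Complex.I / (θ : ℂ)) *
        ((dot (p.2.1 - z.1) p.1.2 + dot (z.1 - p.1.1) p.2.2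
            + dot (p.1.1 - p.2.1) z.2 : ℝ) : ℂ))) volume := by
  have hfg : MeasureTheory.Integrable
      (fun p : Phase d × Phase d => ‖f p.1‖ * ‖g p.2‖) volume :=
    f.integrable.norm.mul_prod g.integrable.norm
  have hc : Continuous (fun p : Phase d × Phase d =>
      Complex.exp ((2 * Complex.I / (θ : ℂ)) *
        ((dot (p.2.1 - z.1) p.1.2 + dot (z.1 - p.1.1) p.2.2
            + dot (p.1.1 - p.2.1) z.2 : ℝ) : ℂ))) := by
    apply Complex.continuous_exp.comp
    apply continuous_const.mul
    apply Complex.continuous_ofReal.comp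
    have c1 : Continuous fun p : Phase d × Phase d => dot (p.2.1 - z.1) p.1.2 :=
      continuous_dot₂.comp ((continuous_snd.fst.sub continuous_const).prodMk
        continuous_fst.snd)
    have c2 : Continuous fun p : Phase d × Phase d => dot (z.1 - p.1.1) p.2.2 :=
      continuous_dot₂.comp ((continuous_const.sub continuous_fst.fst).prodMk
        continuous_snd.snd)
    have c3 : Continuous fun p : Phase d × Phase d => dot (p.1.1 - p.2.1) z.2 :=
      continuous_dot₂.comp ((continuous_fst.fst.sub continuous_snd.fst).prodMk
        continuous_const)
    exact (c1.add c2).add c3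
  refine hfg.mono' ?_ (Eventually.of_forall fun p => ?_)
  · exact ((f.continuous.comp continuous_fst).mul
      (g.continuous.comp continuous_snd)).aestronglyMeasurable.mul hc.aestronglyMeasurable
  · rw [norm_mul, norm_mul, phase_norm, mul_one]

lemma inner_int_eq (θ : ℝ) (hθ : θ ≠ 0) (f g : SchwartzMap (Phase d) ℂ)
    (z p₁ : Phase d) :
    (∫ p₂ : Phase d, f p₁ * g p₂ * Complex.exp ((2 * Complex.I / (θ : ℂ)) *
        ((dot (p₂.1 - z.1) p₁.2 + dot (z.1 - p₁.1) p₂.2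
            + dot (p₁.1 - p₂.1) z.2 : ℝ) : ℂ)))
      = Phi θ f g z p₁ := by
  have hθc : (θ : ℂ) ≠ 0 := by exact_mod_cast hθ
  have hπc : ((Real.pi : ℝ) : ℂ) ≠ 0 := by exact_mod_cast Real.pi_ne_zero
  have key : ∀ p₂ : Phase d,
      f p₁ * g p₂ * Complex.exp ((2 * Complex.I / (θ : ℂ)) *
        ((dot (p₂.1 - z.1) p₁.2 + dot (z.1 - p₁.1) p₂.2
            + dot (p₁.1 - p₂.1) z.2 : ℝ) : ℂ))
      = (f p₁ * Complex.exp ((2 * Complex.I / (θ : ℂ)) *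
            ((dot p₁.1 z.2 - dot z.1 p₁.2 : ℝ) : ℂ)))
        * (Complex.exp (((-2 * Real.pi *
              qp p₂ ((Real.pi * θ)⁻¹ • ((z.2 - p₁.2, p₁.1 - z.1) : Phase d)) : ℝ) : ℂ)
            * Complex.I) * g p₂) := by
    intro p₂
    have hq : qp p₂ ((Real.pi * θ)⁻¹ • ((z.2 - p₁.2, p₁.1 - z.1) : Phase d))
        = (Real.pi * θ)⁻¹ * (dot p₂.1 (z.2 - p₁.2) + dot p₂.2 (p₁.1 - z.1)) := by
      rw [qp_smul_right]; rfl
    have hA : (dot (p₂.1 - z.1) p₁.2 + dot (z.1 - p₁.1) p₂.2 + dot (p₁.1 - p₂.1) z.2)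
        = -(dot p₂.1 (z.2 - p₁.2) + dot p₂.2 (p₁.1 - z.1))
          + (dot p₁.1 z.2 - dot z.1 p₁.2) := by
      simp only [dot_sub_left, dot_sub_right]
      rw [dot_comm z.1 p₂.2, dot_comm p₁.1 p₂.2]
      ring
    have hreal : (-2 * Real.pi *
        ((Real.pi * θ)⁻¹ * (dot p₂.1 (z.2 - p₁.2) + dot p₂.2 (p₁.1 - z.1))))
        = -(2 / θ) * (dot p₂.1 (z.2 - p₁.2) + dot p₂.2 (p₁.1 - z.1)) := by
      field_simp
    have hexp : (2 * Complex.I / (θ : ℂ)) *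
        ((dot (p₂.1 - z.1) p₁.2 + dot (z.1 - p₁.1) p₂.2
            + dot (p₁.1 - p₂.1) z.2 : ℝ) : ℂ)
        = ((-2 * Real.pi *
              qp p₂ ((Real.pi * θ)⁻¹ • ((z.2 - p₁.2, p₁.1 - z.1) : Phase d)) : ℝ) : ℂ)
            * Complex.I
          + (2 * Complex.I / (θ : ℂ)) * ((dot p₁.1 z.2 - dot z.1 p₁.2 : ℝ) : ℂ) := by
      rw [hq, hA, hreal]
      push_cast
      field_simp
    rw [hexp, Complex.exp_add]
    ring
  rw [show (fun p₂ : Phase d => f p₁ * g p₂ * Complex.exp ((2 * Complex.I / (θ : ℂ)) *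
        ((dot (p₂.1 - z.1) p₁.2 + dot (z.1 - p₁.1) p₂.2
            + dot (p₁.1 - p₂.1) z.2 : ℝ) : ℂ)))
      = fun p₂ : Phase d => (f p₁ * Complex.exp ((2 * Complex.I / (θ : ℂ)) *
            ((dot p₁.1 z.2 - dot z.1 p₁.2 : ℝ) : ℂ)))
        * (Complex.exp (((-2 * Real.pi *
              qp p₂ ((Real.pi * θ)⁻¹ • ((z.2 - p₁.2, p₁.1 - z.1) : Phase d)) : ℝ) : ℂ)
            * Complex.I) * g p₂) from funext key]
  rw [MeasureTheory.integral_const_mul]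
  rfl
lemma Phi_shift (θ : ℝ) (hθ : θ ≠ 0) (f g : SchwartzMap (Phase d) ℂ) (z η : Phase d) :
    Phi θ f g z (z + (Real.pi * θ) • ((η.2, -η.1) : Phase d)) = Hfun θ f g z η := by
  have hs : (Real.pi * θ) ≠ 0 := mul_ne_zero Real.pi_ne_zero hθ
  have hθc : (θ : ℂ) ≠ 0 := by exact_mod_cast hθ
  have hπc : ((Real.pi : ℝ) : ℂ) ≠ 0 := by exact_mod_cast Real.pi_ne_zero
  unfold Phi Hfun
  have e1 : z.2 - (z + (Real.pi * θ) • ((η.2, -η.1) : Phase d)).2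
      = (Real.pi * θ) • η.1 := by
    show z.2 - (z.2 + (Real.pi * θ) • (-η.1)) = (Real.pi * θ) • η.1
    rw [smul_neg]; abel
  have e2 : (z + (Real.pi * θ) • ((η.2, -η.1) : Phase d)).1 - z.1
      = (Real.pi * θ) • η.2 := by
    show z.1 + (Real.pi * θ) • η.2 - z.1 = (Real.pi * θ) • η.2
    abel
  have hξ : (Real.pi * θ)⁻¹ • ((z.2 - (z + (Real.pi * θ) • ((η.2, -η.1) : Phase d)).2,
      (z + (Real.pi * θ) • ((η.2, -η.1) : Phase d)).1 - z.1) : Phase d) = η := by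
    rw [e1, e2]
    rw [show (((Real.pi * θ) • η.1, (Real.pi * θ) • η.2) : Phase d)
        = (Real.pi * θ) • ((η.1, η.2) : Phase d) from rfl]
    rw [inv_smul_smul₀ hs]
  have hc₀ : dot (z + (Real.pi * θ) • ((η.2, -η.1) : Phase d)).1 z.2
      - dot z.1 (z + (Real.pi * θ) • ((η.2, -η.1) : Phase d)).2
      = (Real.pi * θ) * qp z η := by
    show dot (z.1 + (Real.pi * θ) • η.2) z.2 - dot z.1 (z.2 + (Real.pi * θ) • (-η.1))
      = (Real.pi * θ) * qp z η
    rw [dot_add_left, dot_add_right, dot_smul_left, dot_smul_right, dot_neg_right,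
      dot_comm η.2 z.2]
    simp only [qp]
    ring
  rw [hξ, hc₀]
  have hexp : (2 * Complex.I / (θ : ℂ)) * (((Real.pi * θ) * qp z η : ℝ) : ℂ)
      = ((2 * Real.pi * qp z η : ℝ) : ℂ) * Complex.I := by
    push_cast
    field_simp
  rw [hexp]
  ring

lemma moyal_eq_Phi (θ : ℝ) (hθ : θ ≠ 0) (f g : SchwartzMap (Phase d) ℂ) (z : Phase d) :
    moyal θ ⇑f ⇑g z
      = ((((Real.pi * θ) ^ (2 * d))⁻¹ : ℝ) : ℂ) * ∫ p₁ : Phase d, Phi θ f g z p₁ := by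
  simp only [moyal]
  congr 1
  rw [Measure.volume_eq_prod, MeasureTheory.integral_prod _ (moyal_integrand_int θ f g z)]
  exact integral_congr_ae (Eventually.of_forall fun p₁ => inner_int_eq θ hθ f g z p₁)

lemma integral_Phi (θ : ℝ) (hθ : θ ≠ 0) (f g : SchwartzMap (Phase d) ℂ) (z : Phase d) :
    ((((Real.pi * θ) ^ (2 * d))⁻¹ : ℝ) : ℂ) * (∫ p₁ : Phase d, Phi θ f g z p₁)
      = ∫ η : Phase d, Hfun θ f g z η := by
  have hs : (Real.pi * θ) ≠ 0 := mul_ne_zero Real.pi_ne_zero hθ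
  have step1 : (∫ p₁ : Phase d, Phi θ f g z p₁) = ∫ u : Phase d, Phi θ f g z (z + u) :=
    (MeasureTheory.integral_add_left_eq_self (μ := volume)
      (fun p₁ => Phi θ f g z p₁) z).symm
  have hsn : |(Real.pi * θ) ^ Module.finrank ℝ (Phase d)| ≠ 0 :=
    abs_ne_zero.2 (pow_ne_zero _ hs)
  have h2 := Measure.integral_comp_smul (volume : Measure (Phase d))
      (fun u => Phi θ f g z (z + u)) (Real.pi * θ)
  have step2 : (∫ u : Phase d, Phi θ f g z (z + u))
      = |(Real.pi * θ) ^ Module.finrank ℝ (Phase d)| •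
          ∫ v : Phase d, Phi θ f g z (z + (Real.pi * θ) • v) := by
    rw [h2, abs_inv, smul_smul, mul_inv_cancel₀ hsn, one_smul]
  have nsmp : MeasurePreserving (fun η : Phase d => ((η.2, -η.1) : Phase d))
      volume volume := by
    have h1 : MeasurePreserving (Prod.map (id : Rd d → Rd d) (Neg.neg : Rd d → Rd d))
        ((volume : Measure (Rd d)).prod volume) ((volume : Measure (Rd d)).prod volume) :=
      (MeasurePreserving.id _).prod (Measure.measurePreserving_neg _)
    have h2' : MeasurePreserving (Prod.swap : Phase d → Rd d × Rd d)
        ((volume : Measure (Rd d)).prod volume) ((volume : Measure (Rd d)).prod volume) :=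
      Measure.measurePreserving_swap
    exact h1.comp h2'
  have step3 : (∫ v : Phase d, Phi θ f g z (z + (Real.pi * θ) • v))
      = ∫ η : Phase d, Phi θ f g z (z + (Real.pi * θ) • ((η.2, -η.1) : Phase d)) :=
    (nsmp.integral_comp (MeasurableEquiv.measurableEmbedding
      ((MeasurableEquiv.prodComm (α := Rd d) (β := Rd d)).trans
        ((MeasurableEquiv.refl (Rd d)).prodCongr (MeasurableEquiv.neg (Rd d)))))
      (fun v => Phi θ f g z (z + (Real.pi * θ) • v))).symm
  rw [step1, step2, step3]
  rw [show (fun η : Phase d => Phi θ f g z (z + (Real.pi * θ) • ((η.2, -η.1) : Phase d)))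
      = fun η => Hfun θ f g z η from funext fun η => Phi_shift θ hθ f g z η]
  rw [finrank_phase]
  have habs : |(Real.pi * θ) ^ (2 * d)| = (Real.pi * θ) ^ (2 * d) :=
    abs_of_nonneg (by rw [pow_mul]; exact pow_nonneg (sq_nonneg _) d)
  rw [habs, Complex.real_smul, ← mul_assoc, ← Complex.ofReal_mul,
    inv_mul_cancel₀ (pow_ne_zero _ hs), Complex.ofReal_one, one_mul]

lemma moyal_eq (θ : ℝ) (hθ : θ ≠ 0) (f g : SchwartzMap (Phase d) ℂ) (z : Phase d) :
    moyal θ ⇑f ⇑g z = ∫ η : Phase d, Hfun θ f g z η :=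
  (moyal_eq_Phi θ hθ f g z).trans (integral_Phi θ hθ f g z)

lemma Hfun_int (θ : ℝ) (hθ : θ ≠ 0) (f g : SchwartzMap (Phase d) ℂ) :
    MeasureTheory.Integrable (fun q : Phase d × Phase d => Hfun θ f g q.1 q.2)
      ((volume : Measure (Phase d)).prod volume) := by
  have hmeas : AEStronglyMeasurable (fun q : Phase d × Phase d => Hfun θ f g q.1 q.2)
      ((volume : Measure (Phase d)).prod volume) := by
    apply Continuous.aestronglyMeasurable
    unfold Hfun
    refine Continuous.mul ?_ (Continuous.mul ?_ ?_)
    · exact Complex.continuous_exp.comp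
        ((Complex.continuous_ofReal.comp
          (continuous_const.mul continuous_qp₂)).mul continuous_const)
    · exact f.continuous.comp (continuous_fst.add
        ((((continuous_snd.snd).prodMk (continuous_snd.fst).neg).const_smul (Real.pi * θ) :
          Continuous fun q : Phase d × Phase d => (Real.pi * θ) • ((q.2.2, -q.2.1) : Phase d))))
    · exact (QF_continuous g).comp continuous_snd
  refine (MeasureTheory.integrable_prod_iff' hmeas).2 ⟨?_, ?_⟩
  · refine Eventually.of_forall fun η => ?_
    have hf1 : MeasureTheory.Integrable
        (fun z : Phase d => f (z + (Real.pi * θ) • ((η.2, -η.1) : Phase d))) volume :=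
      ((measurePreserving_add_right (volume : Measure (Phase d))
          ((Real.pi * θ) • ((η.2, -η.1) : Phase d))).integrable_comp_emb
        (measurableEmbedding_addRight _)).2 f.integrable
    have hf2 : MeasureTheory.Integrable
        (fun z : Phase d => f (z + (Real.pi * θ) • ((η.2, -η.1) : Phase d))
          * QF (⇑g) η) volume := hf1.mul_const _
    refine MeasureTheory.Integrable.bdd_mul hf2 ?_ (c := 1) (Eventually.of_forall fun z => ?_)
    · exact (Complex.continuous_exp.comp
        ((Complex.continuous_ofReal.comp
          (continuous_const.mul (continuous_qp_left η))).mul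
            continuous_const)).aestronglyMeasurable
    · exact le_of_eq (norm_exp_real_mul_I _)
  · have heq : (fun η : Phase d => ∫ z : Phase d, ‖Hfun θ f g z η‖)
        = fun η : Phase d => (∫ z : Phase d, ‖f z‖) * ‖QF (⇑g) η‖ := by
      funext η
      have hnorm : ∀ z : Phase d, ‖Hfun θ f g z η‖
          = ‖f (z + (Real.pi * θ) • ((η.2, -η.1) : Phase d))‖ * ‖QF (⇑g) η‖ := by
        intro z
        unfold Hfun
        rw [norm_mul, norm_mul, norm_exp_real_mul_I, one_mul]
      simp_rw [hnorm]
      rw [MeasureTheory.integral_mul_const]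
      congr 1
      exact MeasureTheory.integral_add_right_eq_self (μ := volume)
        (fun z : Phase d => ‖f z‖) ((Real.pi * θ) • ((η.2, -η.1) : Phase d))
    rw [heq]
    exact ((QF_integrable g).norm.const_mul _)

lemma integral_H_z (θ : ℝ) (hθ : θ ≠ 0) (f g : SchwartzMap (Phase d) ℂ) (η : Phase d) :
    (∫ z : Phase d, Hfun θ f g z η) = QF (⇑f) (-η) * QF (⇑g) η := by
  unfold Hfun
  have h1 : (∫ z : Phase d, Complex.exp (((2 * Real.pi * qp z η : ℝ) : ℂ) * Complex.I) *
      (f (z + (Real.pi * θ) • ((η.2, -η.1) : Phase d)) * QF (⇑g) η))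
      = (∫ z : Phase d, Complex.exp (((2 * Real.pi * qp z η : ℝ) : ℂ) * Complex.I) *
        f (z + (Real.pi * θ) • ((η.2, -η.1) : Phase d))) * QF (⇑g) η := by
    rw [← MeasureTheory.integral_mul_const]
    exact integral_congr_ae (Eventually.of_forall fun z => by ring)
  rw [h1]
  congr 1
  unfold QF
  have h2 := MeasureTheory.integral_sub_right_eq_self (μ := volume)
    (fun z : Phase d => Complex.exp (((2 * Real.pi * qp z η : ℝ) : ℂ) * Complex.I) *
      f (z + (Real.pi * θ) • ((η.2, -η.1) : Phase d)))
    ((Real.pi * θ) • ((η.2, -η.1) : Phase d))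
  rw [← h2]
  refine integral_congr_ae (Eventually.of_forall fun z => ?_)
  have hq : qp (z - (Real.pi * θ) • ((η.2, -η.1) : Phase d)) η = qp z η := by
    rw [qp_sub_left, qp_smul_left, qp_J, mul_zero, sub_zero]
  have hzz : z - (Real.pi * θ) • ((η.2, -η.1) : Phase d)
      + (Real.pi * θ) • ((η.2, -η.1) : Phase d) = z := by abel
  simp only [hq, hzz]
  rw [qp_neg_right]
  rw [show (-2 * Real.pi * -qp z η : ℝ) = 2 * Real.pi * qp z η from by ring]

lemma fourier_pairing (F G : SchwartzMap (Ed d) ℂ) :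
    (∫ a : Ed d, 𝓕 (⇑F) (-a) * 𝓕 (⇑G) a) = ∫ x : Ed d, F x * G x := by
  have hFneg : (fun a : Ed d => 𝓕 (⇑F) (-a)) = 𝓕 (fun x : Ed d => F (-x)) := by
    funext a
    rw [← Real.fourierInv_eq_fourier_neg,
      Real.fourierInv_eq_fourier_comp_neg]
  have hFnegInt : MeasureTheory.Integrable (fun x : Ed d => F (-x)) volume :=
    ((Measure.measurePreserving_neg (volume : Measure (Ed d))).integrable_comp_emb
      (MeasurableEquiv.neg (Ed d)).measurableEmbedding).2 F.integrable
  have hG : MeasureTheory.Integrable (𝓕 (⇑G)) volume := by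
    rw [← SchwartzMap.fourier_coe]
    exact SchwartzMap.integrable _
  have hflip : (innerₗ (Ed d)).flip = innerₗ (Ed d) :=
    LinearMap.ext fun x => LinearMap.ext fun y => by
    simp only [LinearMap.flip_apply, innerₗ_apply_apply]
    exact real_inner_comm x y
  have key := VectorFourier.integral_fourierIntegral_smul_eq_flip
    (L := innerₗ (Ed d)) Real.continuous_fourierChar continuous_inner hFnegInt hG
  rw [hflip] at key
  simp only [smul_eq_mul] at key
  have hGG : ∀ x : Ed d, 𝓕 (𝓕 (⇑G)) x = G (-x) := by
    intro x
    have hinv : 𝓕⁻ (𝓕 (⇑G)) = ⇑G := G.continuous.fourierInv_fourier_eq G.integrable hG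
    calc 𝓕 (𝓕 (⇑G)) x = 𝓕 (𝓕 (⇑G)) (- -x) := by rw [neg_neg]
      _ = 𝓕⁻ (𝓕 (⇑G)) (-x) := (Real.fourierInv_eq_fourier_neg _ _).symm
      _ = G (-x) := by rw [hinv]
  calc (∫ a : Ed d, 𝓕 (⇑F) (-a) * 𝓕 (⇑G) a)
      = ∫ a : Ed d, 𝓕 (fun x : Ed d => F (-x)) a * 𝓕 (⇑G) a :=
        integral_congr_ae (Eventually.of_forall fun a =>
          congrArg (· * 𝓕 (⇑G) a) (congrFun hFneg a))
    _ = ∫ x : Ed d, F (-x) * 𝓕 (𝓕 (⇑G)) x := key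
    _ = ∫ x : Ed d, F (-x) * G (-x) :=
        integral_congr_ae (Eventually.of_forall fun x => by simp only [hGG])
    _ = ∫ x : Ed d, F x * G x :=
        MeasureTheory.integral_neg_eq_self (fun x : Ed d => F x * G x) volume

lemma QF_pairing (f g : SchwartzMap (Phase d) ℂ) :
    (∫ η : Phase d, QF (⇑f) (-η) * QF (⇑g) η) = ∫ x : Phase d, f x * g x := by
  have h1 : ∀ η : Phase d, QF (⇑f) (-η) = 𝓕 (⇑(toE f)) (-((eME d).symm η)) := by
    intro η
    rw [QF_eq]
    congr 1
    rw [eME_symm_apply, eME_symm_apply, map_neg]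
  calc (∫ η : Phase d, QF (⇑f) (-η) * QF (⇑g) η)
      = ∫ η : Phase d, (fun a : Ed d => 𝓕 (⇑(toE f)) (-a) * 𝓕 (⇑(toE g)) a)
          ((eME d).symm η) :=
        integral_congr_ae (Eventually.of_forall fun η => by
          simp only; rw [h1 η, QF_eq])
    _ = ∫ a : Ed d, 𝓕 (⇑(toE f)) (-a) * 𝓕 (⇑(toE g)) a :=
        MeasurePreserving.integral_comp' (eME_mp.symm (eME d))
          (fun a : Ed d => 𝓕 (⇑(toE f)) (-a) * 𝓕 (⇑(toE g)) a)
    _ = ∫ x : Ed d, toE f x * toE g x := fourier_pairing (toE f) (toE g)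
    _ = ∫ x : Ed d, (fun u : Phase d => f u * g u) (eME d x) :=
        integral_congr_ae (Eventually.of_forall fun x => by
          simp only [toE_apply, eME_apply])
    _ = ∫ u : Phase d, f u * g u := by exact eME_mp.integral_comp' (fun u => f u * g u)
end MoyalTrace

/-- For `θ ≠ 0` the Moyal star-product is tracial on Schwartz functions:
`∫ (f₁ ⋆ f₂) = ∫ f₁ f₂`. -/
theorem moyal_tracial (d : ℕ) (θ : ℝ) (hθ : θ ≠ 0) (f₁ f₂ : SchwartzMap (Phase d) ℂ) :
    Integrable (moyal θ ⇑f₁ ⇑f₂) volume ∧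
    ∫ z : Phase d, moyal θ ⇑f₁ ⇑f₂ z = ∫ z : Phase d, f₁ z * f₂ z := by
  have hH := MoyalTrace.Hfun_int θ hθ f₁ f₂
  constructor
  · have hmoyal : moyal θ ⇑f₁ ⇑f₂
        = fun z => ∫ η : Phase d, MoyalTrace.Hfun θ f₁ f₂ z η :=
      funext (MoyalTrace.moyal_eq θ hθ f₁ f₂)
    rw [hmoyal]
    exact hH.integral_prod_left
  · calc ∫ z : Phase d, moyal θ ⇑f₁ ⇑f₂ z
        = ∫ z : Phase d, ∫ η : Phase d, MoyalTrace.Hfun θ f₁ f₂ z η :=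
          integral_congr_ae (Eventually.of_forall fun z =>
            MoyalTrace.moyal_eq θ hθ f₁ f₂ z)
      _ = ∫ η : Phase d, ∫ z : Phase d, MoyalTrace.Hfun θ f₁ f₂ z η :=
          MeasureTheory.integral_integral_swap
            (f := fun z η => MoyalTrace.Hfun θ f₁ f₂ z η) hH
      _ = ∫ η : Phase d, MoyalTrace.QF (⇑f₁) (-η) * MoyalTrace.QF (⇑f₂) η :=
          integral_congr_ae (Eventually.of_forall fun η =>
            MoyalTrace.integral_H_z θ hθ f₁ f₂ η)
      _ = ∫ z : Phase d, f₁ z * f₂ z := MoyalTrace.QF_pairing f₁ f₂
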